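/- Let δ, κ, λ > 0 and μ ≥ 0 with δλ − κ > 0, and suppose δ/(2κ) < √((κ + δμ)/(δ(δλ − κ))). Then the equation tanh(√(2δ)·α) = δ(δ − 2κα) / (√(2δ)(δ(δλ − κ)α² − (κ + δμ))) has exactly one solution α in (0, ∞), and this unique solution satisfies 1/(2λ) < δ/(2κ) < α < √((κ + δμ)/(δ(δλ − κ))). -/

import Mathlib

lemma tanh_lt_one' (x : ℝ) : Real.tanh x < 1 := by
  rw [Real.tanh_eq_sinh_div_cosh, div_lt_one (Real.cosh_pos x)]
  nlinarith [Real.cosh_sub_sinh x, Real.exp_pos (-x)]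

lemma tanh_pos' {x : ℝ} (hx : 0 < x) : 0 < Real.tanh x := by
  rw [Real.tanh_eq_sinh_div_cosh]
  exact div_pos (Real.sinh_pos_iff.mpr hx) (Real.cosh_pos x)

lemma continuous_tanh' : Continuous Real.tanh := by
  have : Real.tanh = fun x => Real.sinh x / Real.cosh x := by
    funext x; exact Real.tanh_eq_sinh_div_cosh x
  rw [this]
  exact Real.continuous_sinh.div Real.continuous_cosh (fun x => (Real.cosh_pos x).ne')

lemma tanh_mul_hasDerivAt (s x : ℝ) :
    HasDerivAt (fun t => Real.tanh (s*t)) (s / Real.cosh (s*x)^2) x := by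
  have h1 : HasDerivAt (fun t : ℝ => Real.sinh (s*t)) (Real.cosh (s*x) * s) x :=
    (Real.hasDerivAt_sinh (s*x)).comp x (by simpa using (hasDerivAt_id x).const_mul s)
  have h2 : HasDerivAt (fun t : ℝ => Real.cosh (s*t)) (Real.sinh (s*x) * s) x :=
    (Real.hasDerivAt_cosh (s*x)).comp x (by simpa using (hasDerivAt_id x).const_mul s)
  have hne : Real.cosh (s*x) ≠ 0 := (Real.cosh_pos _).ne'
  have h3 := h1.div h2 hne
  have heq : (fun t : ℝ => Real.sinh (s*t) / Real.cosh (s*t)) = fun t => Real.tanh (s*t) := by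
    funext t; rw [Real.tanh_eq_sinh_div_cosh]
  change HasDerivAt (fun t : ℝ => Real.sinh (s*t) / Real.cosh (s*t)) _ x at h3
  rw [heq] at h3
  convert h3 using 1
  have hc := Real.cosh_sq_sub_sinh_sq (s*x)
  field_simp
  linear_combination (-s) * hc

lemma ratio_hasDerivAt (d k s A B x : ℝ) (hs : s ≠ 0) (hD : B - A*x^2 ≠ 0) :
    HasDerivAt (fun t : ℝ => d*(2*k*t - d)/(s*(B - A*t^2)))
      (2*d*(k*B + A*k*x^2 - A*d*x)/(s*(B - A*x^2)^2)) x := by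
  have hnum : HasDerivAt (fun t : ℝ => d*(2*k*t - d)) (d*(2*k)) x := by
    simpa using (((hasDerivAt_id x).const_mul (2*k)).sub_const d).const_mul d
  have hden : HasDerivAt (fun t : ℝ => s*(B - A*t^2)) (s*(-(A*(2*x)))) x := by
    simpa using (((hasDerivAt_pow 2 x).const_mul A).const_sub B).const_mul s
  have hden_ne : s*(B - A*x^2) ≠ 0 := mul_ne_zero hs hD
  have h := hnum.div hden hden_ne
  change HasDerivAt (fun t : ℝ => d*(2*k*t - d) / (s*(B - A*t^2))) _ x at h
  convert h using 1
  field_simp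
  ring

lemma f_hasDerivAt (d k s A B x : ℝ) (hs : s ≠ 0) (hD : B - A*x^2 ≠ 0) :
    HasDerivAt (fun t : ℝ => Real.tanh (s*t) - d*(2*k*t - d)/(s*(B - A*t^2)))
      (s / Real.cosh (s*x)^2 - 2*d*(k*B + A*k*x^2 - A*d*x)/(s*(B - A*x^2)^2)) x :=
  (tanh_mul_hasDerivAt s x).sub (ratio_hasDerivAt d k s A B x hs hD)

lemma deriv_strict_anti (d k s A B x y : ℝ) (hd : 0 < d) (hk : 0 < k) (hA : 0 < A)
    (hB : 0 < B) (hs : 0 < s) (hcb : A*d^2 < 4*k^2*B)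
    (hx : d/(2*k) < x) (hxy : x < y) (hy : A*y^2 < B) :
    s / Real.cosh (s*y)^2 - 2*d*(k*B + A*k*y^2 - A*d*y)/(s*(B - A*y^2)^2)
      < s / Real.cosh (s*x)^2 - 2*d*(k*B + A*k*x^2 - A*d*x)/(s*(B - A*x^2)^2) := by
  have hx' : d < 2*k*x := by
    have := (div_lt_iff₀ (by positivity : (0:ℝ) < 2*k)).mp hx; linarith
  have hx0 : 0 < x := by nlinarith
  have hy0 : 0 < y := hx0.trans hxy
  have hDy : 0 < B - A*y^2 := by linarith
  have h2xy : x^2 < y^2 := by nlinarith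
  have hAxy : A*x^2 < A*y^2 := (mul_lt_mul_iff_right₀ hA).mpr h2xy
  have hDx : 0 < B - A*x^2 := by linarith
  have hDxy : B - A*y^2 < B - A*x^2 := by linarith
  have hcosh : Real.cosh (s*x) < Real.cosh (s*y) := by
    rw [Real.cosh_lt_cosh, abs_of_pos (by positivity), abs_of_pos (by positivity)]
    exact (mul_lt_mul_iff_right₀ hs).mpr hxy
  have hcx : 0 < Real.cosh (s*x) := Real.cosh_pos _
  have h1 : s / Real.cosh (s*y)^2 < s / Real.cosh (s*x)^2 := by
    apply div_lt_div_of_pos_left hs (by positivity)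
    nlinarith
  have hnx : 0 < k*B + A*k*x^2 - A*d*x := by nlinarith [sq_nonneg (2*k*x - d)]
  have hkxy : 0 < k*(x+y) - d := by nlinarith
  have hn : k*B + A*k*x^2 - A*d*x < k*B + A*k*y^2 - A*d*y := by
    nlinarith [mul_pos (mul_pos hA (sub_pos.mpr hxy)) hkxy]
  have hny : 0 < k*B + A*k*y^2 - A*d*y := hnx.trans hn
  have hDyx : (B - A*y^2)^2 < (B - A*x^2)^2 := by
    exact pow_lt_pow_left₀ hDxy hDy.le (by norm_num)
  have h2 : 2*d*(k*B + A*k*x^2 - A*d*x)/(s*(B - A*x^2)^2)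
      < 2*d*(k*B + A*k*y^2 - A*d*y)/(s*(B - A*y^2)^2) := by
    rw [div_lt_div_iff₀ (by positivity) (by positivity)]
    calc 2*d*(k*B + A*k*x^2 - A*d*x) * (s*(B - A*y^2)^2)
        < 2*d*(k*B + A*k*y^2 - A*d*y) * (s*(B - A*y^2)^2) :=
          mul_lt_mul_of_pos_right
            ((mul_lt_mul_iff_right₀ (by positivity : (0:ℝ) < 2*d)).mpr hn) (by positivity)
      _ ≤ 2*d*(k*B + A*k*y^2 - A*d*y) * (s*(B - A*x^2)^2) :=
          mul_le_mul_of_nonneg_left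
            (mul_le_mul_of_nonneg_left hDyx.le hs.le) (by positivity)
  linarith

lemma exists_neg_pt (d k s A B c β : ℝ) (hd : 0 < d) (hk : 0 < k) (hA : 0 < A)
    (hB : 0 < B) (hs : 0 < s) (hc0 : 0 < c) (hkc : 2*k*c = d) (hβ : c < β)
    (hβ2 : A*β^2 = B) :
    ∃ b0, c < b0 ∧ b0 < β ∧
      Real.tanh (s*b0) - d*(2*k*b0 - d)/(s*(B - A*b0^2)) < 0 := by
  have hβ0 : 0 < β := hc0.trans hβ
  have hβeq : β = Real.sqrt (B/A) := by
    rw [show B/A = β^2 by field_simp; linarith [hβ2]]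
    exact (Real.sqrt_sq hβ0.le).symm
  set N0 := d*k*(β - c) with hN0_def
  have hN0 : 0 < N0 := mul_pos (mul_pos hd hk) (sub_pos.mpr hβ)
  set m := (c+β)/2 with hm_def
  have hm1 : c < m := by rw [hm_def]; linarith
  have hm2 : m < β := by rw [hm_def]; linarith
  set t0 := B - N0/(2*s) with ht0_def
  refine ⟨max m (Real.sqrt (max t0 0 / A)), ?_, ?_, ?_⟩
  · exact lt_of_lt_of_le hm1 (le_max_left _ _)
  · apply max_lt hm2
    rw [hβeq]
    apply Real.sqrt_lt_sqrt (by positivity)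
    apply div_lt_div_of_pos_right _ hA
    apply max_lt _ hB
    rw [ht0_def]
    have : 0 < N0/(2*s) := by positivity
    linarith
  · set b0 := max m (Real.sqrt (max t0 0 / A)) with hb0_def
    have hb0m : m ≤ b0 := le_max_left _ _
    have hb0c : c < b0 := lt_of_lt_of_le hm1 hb0m
    have hb00 : 0 < b0 := hc0.trans hb0c
    have hb0β : b0 < β := by
      rw [hb0_def]
      apply max_lt hm2
      rw [hβeq]
      apply Real.sqrt_lt_sqrt (by positivity)
      apply div_lt_div_of_pos_right _ hA
      apply max_lt _ hB
      rw [ht0_def]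
      have : 0 < N0/(2*s) := by positivity
      linarith
    have hDb0pos : 0 < B - A*b0^2 := by
      have hsq : b0^2 < β^2 := by nlinarith
      have h2 : A*b0^2 < A*β^2 := (mul_lt_mul_iff_right₀ hA).mpr hsq
      rw [hβ2] at h2; linarith
    have hDb0small : B - A*b0^2 ≤ N0/(2*s) := by
      have h1 : Real.sqrt (max t0 0 / A) ≤ b0 := by rw [hb0_def]; exact le_max_right _ _
      have h2 : max t0 0 / A ≤ b0^2 := by
        rw [← Real.sq_sqrt (by positivity : (0:ℝ) ≤ max t0 0 / A)]
        exact pow_le_pow_left₀ (Real.sqrt_nonneg _) h1 2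
      have h3 : max t0 0 ≤ A*b0^2 := by
        rw [div_le_iff₀ hA] at h2; linarith
      have h4 : t0 ≤ A*b0^2 := le_trans (le_max_left _ _) h3
      rw [ht0_def] at h4; linarith
    have hnum : N0 ≤ d*(2*k*b0 - d) := by
      have h6 : 0 ≤ d*k*(b0 - m) :=
        mul_nonneg (mul_nonneg hd.le hk.le) (sub_nonneg.mpr hb0m)
      have he : d*(2*k*b0 - d) - N0 = 2*(d*k*(b0 - m)) := by
        rw [hN0_def, hm_def, ← hkc]; ring
      linarith
    have hden2 : 0 < s*(B - A*b0^2) := by positivity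
    have hden3 : s*(B - A*b0^2) ≤ N0/2 := by
      calc s*(B - A*b0^2) ≤ s*(N0/(2*s)) := mul_le_mul_of_nonneg_left hDb0small hs.le
        _ = N0/2 := by field_simp
    have hratio : 2 ≤ d*(2*k*b0 - d)/(s*(B - A*b0^2)) := by
      rw [le_div_iff₀ hden2]; linarith
    have htl : Real.tanh (s*b0) < 1 := tanh_lt_one' _
    linarith

theorem key_unique (d k s A B : ℝ) (hd : 0 < d) (hk : 0 < k) (hA : 0 < A) (hB : 0 < B)
    (hs : 0 < s) (hβ : d/(2*k) < Real.sqrt (B/A)) :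
    (∃! α : ℝ, 0 < α ∧ Real.tanh (s*α) = d*(2*k*α - d)/(s*(B - A*α^2))) ∧
    (∀ α : ℝ, 0 < α → Real.tanh (s*α) = d*(2*k*α - d)/(s*(B - A*α^2)) →
      d/(2*k) < α ∧ α < Real.sqrt (B/A)) := by
  set c := d/(2*k) with hc_def
  set β := Real.sqrt (B/A) with hβ_def
  have hc0 : 0 < c := by positivity
  have hβ0 : 0 < β := hc0.trans hβ
  have hkc : 2*k*c = d := by rw [hc_def]; field_simp
  have hβ2 : A*β^2 = B := by
    rw [hβ_def, Real.sq_sqrt (by positivity)]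
    field_simp
  have hcb : A*d^2 < 4*k^2*B := by
    have h1 : A*c^2 < A*β^2 :=
      (mul_lt_mul_iff_right₀ hA).mpr (pow_lt_pow_left₀ hβ hc0.le (by norm_num))
    rw [hβ2] at h1
    calc A*d^2 = 4*k^2*(A*c^2) := by rw [← hkc]; ring
      _ < 4*k^2*B := by
          apply mul_lt_mul_of_pos_left h1 (by positivity)
  set f : ℝ → ℝ := fun α => Real.tanh (s*α) - d*(2*k*α - d)/(s*(B - A*α^2)) with hf_def
  have hEq : ∀ α : ℝ, (Real.tanh (s*α) = d*(2*k*α - d)/(s*(B - A*α^2))) ↔ f α = 0 := by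
    intro α
    rw [hf_def]
    exact sub_eq_zero.symm
  -- all solutions lie in (c, β)
  have hsol : ∀ α : ℝ, 0 < α → f α = 0 → c < α ∧ α < β := by
    intro α hα hfα
    have htp : 0 < Real.tanh (s*α) := tanh_pos' (by positivity)
    have hratio : Real.tanh (s*α) = d*(2*k*α - d)/(s*(B - A*α^2)) := (hEq α).mpr hfα
    rw [hratio] at htp
    constructor
    · by_contra hcon
      push_neg at hcon
      have h8 : 2*k*α ≤ 2*k*c := mul_le_mul_of_nonneg_left hcon (by positivity)
      have h7 : 2*k*α - d ≤ 0 := by linarith [hkc]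
      have hnum : d*(2*k*α - d) ≤ 0 := mul_nonpos_iff.mpr (Or.inl ⟨hd.le, h7⟩)
      have hden : 0 < s*(B - A*α^2) := by
        have h2 : A*α^2 < A*β^2 :=
          (mul_lt_mul_iff_right₀ hA).mpr
            (pow_lt_pow_left₀ (lt_of_le_of_lt hcon hβ) hα.le (by norm_num))
        rw [hβ2] at h2
        exact mul_pos hs (by linarith)
      have : d*(2*k*α - d)/(s*(B - A*α^2)) ≤ 0 :=
        div_nonpos_iff.mpr (Or.inr ⟨hnum, hden.le⟩)
      linarith
    · by_contra hcon
      push_neg at hcon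
      have h8 : 2*k*c < 2*k*α :=
        (mul_lt_mul_iff_right₀ (by positivity : (0:ℝ) < 2*k)).mpr (hβ.trans_le hcon)
      have h7 : 0 ≤ 2*k*α - d := by linarith [hkc]
      have hnum : 0 ≤ d*(2*k*α - d) := mul_nonneg hd.le h7
      have hden : s*(B - A*α^2) ≤ 0 := by
        have h2 : A*β^2 ≤ A*α^2 :=
          (mul_le_mul_iff_right₀ hA).mpr (pow_le_pow_left₀ hβ0.le hcon 2)
        rw [hβ2] at h2
        exact mul_nonpos_iff.mpr (Or.inl ⟨hs.le, by linarith⟩)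
      have : d*(2*k*α - d)/(s*(B - A*α^2)) ≤ 0 :=
        div_nonpos_iff.mpr (Or.inl ⟨hnum, hden⟩)
      linarith
  -- continuity on [c, b] for b < β
  have hcont : ∀ b, b < β → ContinuousOn f (Set.Icc c b) := by
    intro b hbβ
    rw [hf_def]
    apply ContinuousOn.sub
    · exact (continuous_tanh'.comp (continuous_const.mul continuous_id)).continuousOn
    · apply ContinuousOn.div
      · exact (by fun_prop : Continuous fun t : ℝ => d*(2*k*t - d)).continuousOn
      · exact (by fun_prop : Continuous fun t : ℝ => s*(B - A*t^2)).continuousOn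
      · intro x hx
        obtain ⟨hx1, hx2⟩ := hx
        have h2 : A*x^2 < A*β^2 :=
          (mul_lt_mul_iff_right₀ hA).mpr
            (pow_lt_pow_left₀ (lt_of_le_of_lt hx2 hbβ) (hc0.le.trans hx1) (by norm_num))
        rw [hβ2] at h2
        have : 0 < B - A*x^2 := by linarith
        exact (mul_pos hs this).ne'
  -- f c > 0
  have hfc : 0 < f c := by
    rw [hf_def]
    simp only
    rw [show d*(2*k*c - d) = 0 by rw [hkc]; ring, zero_div, sub_zero]
    exact tanh_pos' (by positivity)
  -- a point b0 ∈ (c, β) with f b0 < 0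
  obtain ⟨b0, hb0c, hb0β, hfb0'⟩ :=
    exists_neg_pt d k s A B c β hd hk hA hB hs hc0 hkc hβ hβ2
  have hfb0 : f b0 < 0 := by rw [hf_def]; exact hfb0'
  -- existence via IVT
  have h0mem : (0:ℝ) ∈ Set.Ioo (f b0) (f c) := ⟨hfb0, hfc⟩
  obtain ⟨α₀, hα₀mem, hα₀⟩ := intermediate_value_Ioo' hb0c.le (hcont b0 hb0β) h0mem
  have hα₀c : c < α₀ := hα₀mem.1
  have hα₀β : α₀ < β := hα₀mem.2.trans hb0β
  have hα₀pos : 0 < α₀ := hc0.trans hα₀c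
  -- uniqueness
  have huniq : ∀ x y : ℝ, c < x → x < y → y < β → f x = 0 → f y = 0 → False := by
    intro x y hcx hxy hyβ hfx hfy
    have hconc : StrictConcaveOn ℝ (Set.Icc c y) f := by
      apply StrictAntiOn.strictConcaveOn_of_deriv (convex_Icc c y) (hcont y hyβ)
      rw [interior_Icc]
      intro u hu v hv huv
      have hvB : A*v^2 < B := by
        have h2 : A*v^2 < A*β^2 :=
          (mul_lt_mul_iff_right₀ hA).mpr
            (pow_lt_pow_left₀ (hv.2.trans hyβ) (hc0.trans hv.1).le (by norm_num))
        rwa [hβ2] at h2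
      have huB : A*u^2 < B := by
        have h2 : A*u^2 < A*β^2 :=
          (mul_lt_mul_iff_right₀ hA).mpr
            (pow_lt_pow_left₀ (hu.2.trans hyβ) (hc0.trans hu.1).le (by norm_num))
        rwa [hβ2] at h2
      have hdu : deriv f u = s / Real.cosh (s*u)^2
          - 2*d*(k*B + A*k*u^2 - A*d*u)/(s*(B - A*u^2)^2) := by
        rw [hf_def]
        exact (f_hasDerivAt d k s A B u hs.ne' (by linarith)).deriv
      have hdv : deriv f v = s / Real.cosh (s*v)^2
          - 2*d*(k*B + A*k*v^2 - A*d*v)/(s*(B - A*v^2)^2) := by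
        rw [hf_def]
        exact (f_hasDerivAt d k s A B v hs.ne' (by linarith)).deriv
      rw [hdu, hdv]
      exact deriv_strict_anti d k s A B u v hd hk hA hB hs hcb hu.1 huv hvB
    have ht1 : 0 < (y - x)/(y - c) := div_pos (by linarith) (by linarith)
    have ht2 : 0 < (x - c)/(y - c) := div_pos (by linarith) (by linarith)
    have hyc : y - c ≠ 0 := by intro h0; rw [sub_eq_zero] at h0; linarith
    have hsum : (y - x)/(y - c) + (x - c)/(y - c) = 1 := by
      rw [← add_div, show y - x + (x - c) = y - c by ring, div_self hyc]
    have hcomb := hconc.2 (Set.left_mem_Icc.mpr (by linarith))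
      (Set.right_mem_Icc.mpr (by linarith)) (by linarith : c ≠ y) ht1 ht2 hsum
    rw [smul_eq_mul, smul_eq_mul, smul_eq_mul, smul_eq_mul] at hcomb
    have hxeq : (y - x)/(y - c) * c + (x - c)/(y - c) * y = x := by
      rw [div_mul_eq_mul_div, div_mul_eq_mul_div, ← add_div,
        div_eq_iff hyc]
      ring
    rw [hxeq, hfx, hfy] at hcomb
    rw [mul_zero, add_zero] at hcomb
    linarith [mul_pos ht1 hfc]
  constructor
  · refine ⟨α₀, ⟨hα₀pos, (hEq α₀).mpr hα₀⟩, ?_⟩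
    intro α' ⟨hα'pos, hα'eq⟩
    have hfα' : f α' = 0 := (hEq α').mp hα'eq
    obtain ⟨hα'c, hα'β⟩ := hsol α' hα'pos hfα'
    by_contra hne
    rcases lt_trichotomy α' α₀ with hlt | heq | hgt
    · exact huniq α' α₀ hα'c hlt hα₀β hfα' hα₀
    · exact hne heq
    · exact huniq α₀ α' hα₀c hgt hα'β hα₀ hfα'
  · intro α hαpos hαeq
    exact hsol α hαpos ((hEq α).mp hαeq)

/-- Let `δ, κ, λ > 0`, `μ ≥ 0` with `δλ − κ > 0`, and suppose
`δ/(2κ) < √((κ + δμ)/(δ(δλ − κ)))`. Then the equation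
`tanh(√(2δ)·α) = δ(δ − 2κα)/(√(2δ)(δ(δλ − κ)α² − (κ + δμ)))` has exactly one solution
`α ∈ (0, ∞)`, and it satisfies `1/(2λ) < δ/(2κ) < α < √((κ + δμ)/(δ(δλ − κ)))`. -/
theorem statement10 (δ κ lam μ : ℝ) (hδ : 0 < δ) (hκ : 0 < κ) (hlam : 0 < lam)
    (hμ : 0 ≤ μ) (h : 0 < δ*lam - κ)
    (hord : δ/(2*κ) < Real.sqrt ((κ + δ*μ)/(δ*(δ*lam - κ)))) :
    (∃! α : ℝ, 0 < α ∧
      Real.tanh (Real.sqrt (2*δ) * α) =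
        δ*(δ - 2*κ*α) / (Real.sqrt (2*δ) * (δ*(δ*lam - κ)*α^2 - (κ + δ*μ)))) ∧
    (∀ α : ℝ, 0 < α →
      Real.tanh (Real.sqrt (2*δ) * α) =
        δ*(δ - 2*κ*α) / (Real.sqrt (2*δ) * (δ*(δ*lam - κ)*α^2 - (κ + δ*μ))) →
      1/(2*lam) < δ/(2*κ) ∧ δ/(2*κ) < α ∧ α < Real.sqrt ((κ + δ*μ)/(δ*(δ*lam - κ)))) := by
  have hA : 0 < δ*(δ*lam - κ) := mul_pos hδ h
  have hB : 0 < κ + δ*μ := by nlinarith [mul_nonneg hδ.le hμ]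
  have hs : 0 < Real.sqrt (2*δ) := Real.sqrt_pos.mpr (by linarith)
  have hkey := key_unique δ κ (Real.sqrt (2*δ)) (δ*(δ*lam - κ)) (κ + δ*μ) hδ hκ hA hB hs hord
  have hflip : ∀ α : ℝ, δ*(δ - 2*κ*α) / (Real.sqrt (2*δ) * (δ*(δ*lam - κ)*α^2 - (κ + δ*μ)))
      = δ*(2*κ*α - δ) / (Real.sqrt (2*δ) * ((κ + δ*μ) - δ*(δ*lam - κ)*α^2)) := by
    intro α
    rw [show δ*(δ - 2*κ*α) = -(δ*(2*κ*α - δ)) by ring,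
        show Real.sqrt (2*δ) * (δ*(δ*lam - κ)*α^2 - (κ + δ*μ))
          = -(Real.sqrt (2*δ) * ((κ + δ*μ) - δ*(δ*lam - κ)*α^2)) by ring,
        neg_div_neg_eq]
  constructor
  · obtain ⟨⟨α₀, ⟨hpos, heq⟩, huniq⟩, _⟩ := hkey
    refine ⟨α₀, ⟨hpos, by rw [hflip]; exact heq⟩, ?_⟩
    intro α' ⟨h1, h2⟩
    rw [hflip α'] at h2
    exact huniq α' ⟨h1, h2⟩
  · intro α hαpos hαeq
    rw [hflip α] at hαeq
    obtain ⟨hc, hβ⟩ := hkey.2 α hαpos hαeq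
    refine ⟨?_, hc, hβ⟩
    rw [div_lt_div_iff₀ (by positivity) (by positivity)]
    nlinarith
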